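/- Let $G$ be a finite abelian group, let $H$ be a subgroup of $G$, let $\widehat{G}$ denote the group of characters of $G$ with values in $\mathbb{C}^\times$, let $\widehat{G}_H := \{\chi \in \widehat{G} \mid \chi(h) = 1 \text{ for all } h \in H\}$, and let $X \subseteq \widehat{G}$ be a complete set of representatives of the cosets of $\widehat{G}_H$ in $\widehat{G}$. For $x : G \to \mathbb{C}$ define, for each coset $C \in G/H$ and $\chi \in X$, $y^{\chi}_{C} := \sum_{g \in C} \chi(g)\, x_g$, and for each $h \in H$ define $z_h := \frac{1}{|H|} \sum_{\chi \in X} \chi(h)^{-1}\, \Theta_{G/H}\big(y^{\chi}\big)$. Then $\Theta_G(x) = \Theta_H(z)$, i.e., the group determinant of $G$ evaluated at $x$ equals the group determinant of $H$ evaluated at the function $h \mapsto z_h$. -/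

import Mathlib

open scoped Classical

/-- The group determinant of a finite group `G`: the determinant of the matrix whose
`(g, h)` entry is `x (g * h⁻¹)`. -/
noncomputable def groupDet (G : Type*) [Group G] [Fintype G] {R : Type*} [CommRing R]
    (x : G → R) : R :=
  Matrix.det (Matrix.of fun g h : G => x (g * h⁻¹))

set_option linter.unusedSectionVars false

noncomputable section

namespace GD

variable (A : Type*) [CommGroup A] [Finite A]

instance expNeZero : NeZero ((Monoid.exponent A : ℂ)) := by
  have h := Monoid.ExponentExists.of_finite (G := A) |>.exponent_pos
  exact ⟨by exact_mod_cast h.ne'⟩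

/-- duality iso -/
def dual : (A →* ℂˣ) ≃* A :=
  (CommGroup.monoidHom_mulEquiv_of_hasEnoughRootsOfUnity A ℂ).some

instance : Finite (A →* ℂˣ) := Finite.of_equiv A (dual A).symm.toEquiv

instance : Fintype (A →* ℂˣ) := Fintype.ofFinite _

lemma card_char [Fintype A] : Fintype.card (A →* ℂˣ) = Fintype.card A :=
  Fintype.card_congr (dual A).toEquiv

variable {A}

lemma sum_char [Fintype A] (χ : A →* ℂˣ) (hχ : χ ≠ 1) : ∑ a, (χ a : ℂ) = 0 := by
  obtain ⟨a₀, ha₀⟩ : ∃ a, χ a ≠ 1 := by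
    by_contra h
    push_neg at h
    exact hχ (MonoidHom.ext fun a => h a)
  have key : (χ a₀ : ℂ) * ∑ a, (χ a : ℂ) = ∑ a, (χ a : ℂ) := by
    rw [Finset.mul_sum]
    exact Fintype.sum_bijective (a₀ * ·) (Group.mulLeft_bijective a₀)
      (fun a => (χ a₀ : ℂ) * (χ a : ℂ)) (fun a => (χ a : ℂ))
      (fun a => by simp [map_mul])
  have h1 : ((χ a₀ : ℂ) - 1) * ∑ a, (χ a : ℂ) = 0 := by rw [sub_mul, key]; ring
  rcases mul_eq_zero.mp h1 with h | h
  · exact absurd (by rwa [sub_eq_zero, ← Units.val_one, Units.val_inj] at h) ha₀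
  · exact h

lemma sum_char_eq [Fintype A] (χ : A →* ℂˣ) :
    ∑ a, (χ a : ℂ) = if χ = 1 then (Fintype.card A : ℂ) else 0 := by
  split_ifs with h
  · subst h; simp
  · exact sum_char χ h


/-- evaluation at a point as a character of the character group -/
def evalChar (a : A) : (A →* ℂˣ) →* ℂˣ where
  toFun χ := χ a
  map_one' := rfl
  map_mul' _ _ := rfl

lemma sum_char_apply [Fintype A] (a : A) :
    ∑ χ : A →* ℂˣ, (χ a : ℂ) = if a = 1 then (Fintype.card A : ℂ) else 0 := by
  split_ifs with h
  · subst h; simp [card_char A]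
  · refine sum_char (A := A →* ℂˣ) (evalChar a) ?_
    intro hc
    obtain ⟨φ, hφ⟩ := CommGroup.exists_apply_ne_one_of_hasEnoughRootsOfUnity A ℂ h
    have := DFunLike.congr_fun hc φ
    simp only [evalChar, MonoidHom.coe_mk, OneHom.coe_mk, MonoidHom.one_apply] at this
    exact hφ this


lemma groupDet_eq_prod (A : Type*) [CommGroup A] [Fintype A] (x : A → ℂ) :
    groupDet A x = ∏ χ : A →* ℂˣ, ∑ a, (χ a : ℂ) * x a := by
  classical
  set e : (A →* ℂˣ) ≃ A := (dual A).toEquiv with he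
  set M : Matrix A A ℂ := Matrix.of fun g h : A => x (g * h⁻¹) with hM
  set U : Matrix A A ℂ := Matrix.of fun g h : A => ((e.symm h) g : ℂ) with hU
  set d : A → ℂ := fun h => ∑ k, (((e.symm h) k : ℂ))⁻¹ * x k with hd
  have hMU : M * U = U * Matrix.diagonal d := by
    ext g h
    rw [Matrix.mul_apply, Matrix.mul_diagonal]
    set χ := e.symm h with hχ
    have : ∀ j : A, M g (g * j⁻¹) * U (g * j⁻¹) h = (χ g : ℂ) * ((χ j : ℂ)⁻¹ * x j) := by
      intro j
      simp only [hM, hU, Matrix.of_apply]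
      have h1 : g * (g * j⁻¹)⁻¹ = j := by rw [mul_inv, inv_inv, mul_inv_cancel_left]
      rw [h1, ← hχ]
      have h2 : (χ (g * j⁻¹) : ℂ) = (χ g : ℂ) * (χ j : ℂ)⁻¹ := by
        rw [map_mul, map_inv]
        push_cast
        rfl
      rw [h2]; ring
    calc ∑ j, M g j * U j h = ∑ j, M g (g * j⁻¹) * U (g * j⁻¹) h := by
          refine (Fintype.sum_bijective (fun j => g * j⁻¹) ?_ _ _ (fun j => rfl)).symm
          exact ((Equiv.inv A).trans (Equiv.mulLeft g)).bijective
      _ = ∑ j, (χ g : ℂ) * ((χ j : ℂ)⁻¹ * x j) := by simp only [this]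
      _ = U g h * d h := by rw [← Finset.mul_sum]; rfl
  have hUdet : U.det ≠ 0 := by
    set V : Matrix A A ℂ := Matrix.of fun g h : A => (((e.symm g) h : ℂ))⁻¹ with hV
    have hVU : V * U = (Fintype.card A : ℂ) • (1 : Matrix A A ℂ) := by
      ext g h
      rw [Matrix.mul_apply]
      have : ∀ k, V g k * U k h = (((e.symm g)⁻¹ * e.symm h) k : ℂ) := by
        intro k
        simp only [hV, hU, Matrix.of_apply, MonoidHom.mul_apply, MonoidHom.inv_apply]
        push_cast
        ring
      simp only [this]
      rw [sum_char_eq]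
      have hiff : ((e.symm g)⁻¹ * e.symm h = 1) ↔ g = h := by
        constructor
        · intro hc; exact e.symm.injective (inv_mul_eq_one.mp hc)
        · rintro rfl; exact inv_mul_cancel (G := A →* ℂˣ) _
      by_cases hgh : g = h
      · rw [if_pos (hiff.mpr hgh), hgh]
        simp [Matrix.smul_apply, Matrix.one_apply]
      · rw [if_neg (fun hc => hgh (hiff.mp hc))]
        simp [Matrix.smul_apply, Matrix.one_apply, hgh]
    intro hc
    have := congrArg Matrix.det hVU
    rw [Matrix.det_mul, hc, mul_zero, Matrix.det_smul, Matrix.det_one, mul_one] at this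
    have hcard : (Fintype.card A : ℂ) ≠ 0 := Nat.cast_ne_zero.mpr Fintype.card_ne_zero
    exact (pow_ne_zero _ hcard) this.symm
  have hdet : M.det = (Matrix.diagonal d).det := by
    have h2 := congrArg Matrix.det hMU
    rw [Matrix.det_mul, Matrix.det_mul] at h2
    exact mul_right_cancel₀ hUdet (h2.trans (mul_comm _ _))
  have : groupDet A x = ∏ h, d h := by
    rw [groupDet, ← hM, hdet, Matrix.det_diagonal]
  rw [this, hd]
  calc ∏ h : A, ∑ k, (((e.symm h) k : ℂ))⁻¹ * x k
      = ∏ χ : A →* ℂˣ, ∑ k, ((χ k : ℂ))⁻¹ * x k := by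
        exact Fintype.prod_equiv e.symm _ _ (fun h => rfl)
    _ = ∏ χ : A →* ℂˣ, ∑ k, ((χ k : ℂ)) * x k := by
        refine Fintype.prod_equiv (Equiv.inv (A →* ℂˣ)) _ _ (fun χ => ?_)
        refine Finset.sum_congr rfl (fun k _ => ?_)
        simp only [Equiv.inv_apply, MonoidHom.inv_apply, Units.val_inv_eq_inv_val]

end GD

noncomputable section Main

open GD

/-- With `y^χ_C = ∑_{g ∈ C} χ(g) x_g` and
`z_h = (1/|H|) ∑_{χ ∈ X} χ(h)⁻¹ Θ_{G/H}(y^χ)`, we have `Θ_G(x) = Θ_H(z)`. -/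
theorem groupDet_eq_groupDet_subgroup {G : Type*} [CommGroup G] [Fintype G]
    (H : Subgroup G) (X : Finset (G →* ℂˣ))
    (hX : ∀ χ : G →* ℂˣ, ∃! ψ : G →* ℂˣ, ψ ∈ X ∧ ∀ h ∈ H, (ψ⁻¹ * χ) h = 1)
    (x : G → ℂ) :
    groupDet G x =
      groupDet H (fun h : H =>
        (Nat.card H : ℂ)⁻¹ *
          ∑ χ ∈ X, ((χ (h : G))⁻¹ : ℂˣ) *
            groupDet (G ⧸ H) (fun C : G ⧸ H =>
              ∑ g ∈ Finset.univ.filter (fun g : G => (QuotientGroup.mk g : G ⧸ H) = C),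
                (χ g : ℂ) * x g)) := by
  classical
  set S : (G →* ℂˣ) → ℂ := fun χ => ∑ g, (χ g : ℂ) * x g with hS
  set lift : ((G ⧸ H) →* ℂˣ) → (G →* ℂˣ) := fun ρ => ρ.comp (QuotientGroup.mk' H) with hlift
  set P : (G →* ℂˣ) → ℂ := fun χ => ∏ ρ : (G ⧸ H) →* ℂˣ, S (lift ρ * χ) with hP
  -- step 1: the inner group determinant over G ⧸ H
  have hQ : ∀ χ : G →* ℂˣ,
      groupDet (G ⧸ H) (fun C : G ⧸ H =>
        ∑ g ∈ Finset.univ.filter (fun g : G => (QuotientGroup.mk g : G ⧸ H) = C),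
          (χ g : ℂ) * x g) = P χ := by
    intro χ
    rw [GD.groupDet_eq_prod]
    refine Finset.prod_congr rfl fun ρ _ => ?_
    calc ∑ C : G ⧸ H, (ρ C : ℂ) *
            ∑ g ∈ Finset.univ.filter (fun g : G => (QuotientGroup.mk g : G ⧸ H) = C),
              (χ g : ℂ) * x g
        = ∑ C : G ⧸ H, ∑ g ∈ Finset.univ.filter (fun g : G => (QuotientGroup.mk g : G ⧸ H) = C),
            (ρ (QuotientGroup.mk g) : ℂ) * ((χ g : ℂ) * x g) := by
          refine Finset.sum_congr rfl fun C _ => ?_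
          rw [Finset.mul_sum]
          refine Finset.sum_congr rfl fun g hg => ?_
          rw [(Finset.mem_filter.mp hg).2]
      _ = ∑ g, (ρ (QuotientGroup.mk g) : ℂ) * ((χ g : ℂ) * x g) := Finset.sum_fiberwise _ _ _
      _ = S (lift ρ * χ) := by
          refine Finset.sum_congr rfl fun g _ => ?_
          simp only [hS, hlift, MonoidHom.mul_apply, MonoidHom.coe_comp, Function.comp_apply,
            QuotientGroup.mk'_apply, Units.val_mul]
          ring
  -- helper: lifted characters are trivial on H
  have hker : ∀ (ρ : (G ⧸ H) →* ℂˣ) (h : G), h ∈ H → (lift ρ) h = 1 := by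
    intro ρ h hh
    simp only [hlift, MonoidHom.coe_comp, Function.comp_apply, QuotientGroup.mk'_apply]
    rw [(QuotientGroup.eq_one_iff h).mpr hh, map_one]
  -- injectivity of restriction on X
  have resinj : ∀ χ₁ ∈ X, ∀ χ₂ ∈ X, χ₁.domRestrict H = χ₂.domRestrict H → χ₁ = χ₂ := by
    intro χ₁ h₁ χ₂ h₂ hres
    obtain ⟨ψ, -, huniq⟩ := hX χ₂
    have e₂ : χ₂ = ψ := huniq χ₂ ⟨h₂, fun h hh => by simp⟩
    have e₁ : χ₁ = ψ := by
      refine huniq χ₁ ⟨h₁, fun h hh => ?_⟩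
      have hv : χ₁ h = χ₂ h := by
        have := DFunLike.congr_fun hres (⟨h, hh⟩ : H)
        simpa only [MonoidHom.restrict_apply] using this
      simp [MonoidHom.mul_apply, MonoidHom.inv_apply, hv]
    rw [e₁, e₂]
  -- bijection (X × characters of G/H) ≃ characters of G
  have hmaps : ∀ p ∈ X ×ˢ (Finset.univ : Finset ((G ⧸ H) →* ℂˣ)),
      lift p.2 * p.1 ∈ (Finset.univ : Finset (G →* ℂˣ)) := fun _ _ => Finset.mem_univ _
  have hinj : ∀ p₁ (h₁ : p₁ ∈ X ×ˢ (Finset.univ : Finset ((G ⧸ H) →* ℂˣ)))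
      p₂ (h₂ : p₂ ∈ X ×ˢ (Finset.univ : Finset ((G ⧸ H) →* ℂˣ))),
      lift p₁.2 * p₁.1 = lift p₂.2 * p₂.1 → p₁ = p₂ := by
    rintro ⟨χ₁, ρ₁⟩ h₁ ⟨χ₂, ρ₂⟩ h₂ heq
    simp only [Finset.mem_product] at h₁ h₂
    obtain ⟨ψ, -, huniq⟩ := hX (lift ρ₁ * χ₁)
    have e₁ : χ₁ = ψ := by
      refine huniq χ₁ ⟨h₁.1, fun h hh => ?_⟩
      simp [MonoidHom.mul_apply, MonoidHom.inv_apply, hker ρ₁ h hh]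
    have e₂ : χ₂ = ψ := by
      refine huniq χ₂ ⟨h₂.1, fun h hh => ?_⟩
      rw [heq]
      simp [MonoidHom.mul_apply, MonoidHom.inv_apply, hker ρ₂ h hh]
    have ec : χ₁ = χ₂ := e₁.trans e₂.symm
    have el : lift ρ₁ = lift ρ₂ := by
      rw [ec] at heq
      ext g
      have hg := DFunLike.congr_fun heq g
      simp only [MonoidHom.mul_apply] at hg
      exact congrArg Units.val (mul_right_cancel hg)
    have er : ρ₁ = ρ₂ := by
      have := (MonoidHom.cancel_right (QuotientGroup.mk'_surjective H)).mp el
      exact this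
    rw [ec, er]
  have hsurj : ∀ χ ∈ (Finset.univ : Finset (G →* ℂˣ)),
      ∃ p, ∃ hp : p ∈ X ×ˢ (Finset.univ : Finset ((G ⧸ H) →* ℂˣ)), lift p.2 * p.1 = χ := by
    intro χ _
    obtain ⟨ψ, ⟨hmem, hker'⟩, -⟩ := hX χ
    have hle : H ≤ (ψ⁻¹ * χ).ker := fun g hg => MonoidHom.mem_ker.mpr (hker' g hg)
    refine ⟨(ψ, QuotientGroup.lift H (ψ⁻¹ * χ) hle), Finset.mem_product.mpr ⟨hmem, Finset.mem_univ _⟩, ?_⟩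
    ext g
    simp only [MonoidHom.mul_apply, hlift, MonoidHom.coe_comp, Function.comp_apply,
      QuotientGroup.mk'_apply, QuotientGroup.lift_mk', MonoidHom.inv_apply]
    congr 1
    rw [mul_comm ((ψ g)⁻¹) (χ g), mul_assoc, inv_mul_cancel, mul_one]
  have hbij : ∀ f : (G →* ℂˣ) → ℂ,
      ∏ χ ∈ X, ∏ ρ : (G ⧸ H) →* ℂˣ, f (lift ρ * χ) = ∏ χ : G →* ℂˣ, f χ := by
    intro f
    rw [← Finset.prod_product']
    exact Finset.prod_bij (fun p _ => lift p.2 * p.1) hmaps hinj hsurj (fun p _ => rfl)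
  -- cardinality of X
  have cardX : X.card = Fintype.card (H →* ℂˣ) := by
    have h1 : (X ×ˢ (Finset.univ : Finset ((G ⧸ H) →* ℂˣ))).card = Fintype.card (G →* ℂˣ) := by
      rw [← Finset.card_univ]
      exact Finset.card_bij (fun p _ => lift p.2 * p.1) hmaps hinj hsurj
    rw [Finset.card_product, Finset.card_univ, GD.card_char, GD.card_char] at h1
    rw [GD.card_char]
    have h2 : Fintype.card G = Fintype.card (G ⧸ H) * Fintype.card H := by
      have := Subgroup.card_eq_card_quotient_mul_card_subgroup H
      simpa [Nat.card_eq_fintype_card] using this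
    have hq0 : 0 < Fintype.card (G ⧸ H) := Fintype.card_pos
    refine Nat.eq_of_mul_eq_mul_right hq0 ?_
    rw [h1, h2, mul_comm]
  -- restriction is surjective from X onto characters of H
  have hres_surj : ∀ φ : H →* ℂˣ, ∃ χ ∈ X, χ.domRestrict H = φ := by
    intro φ
    have himg : X.image (fun χ : G →* ℂˣ => χ.domRestrict H) = Finset.univ := by
      apply Finset.eq_univ_of_card
      rw [Finset.card_image_of_injOn (fun χ₁ h₁ χ₂ h₂ => resinj χ₁ h₁ χ₂ h₂), cardX]
    have : φ ∈ X.image (fun χ : G →* ℂˣ => χ.domRestrict H) := himg ▸ Finset.mem_univ φ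
    simpa using Finset.mem_image.mp this
  choose σ hσX hσres using hres_surj
  -- rewrite the z-function
  have hHcard : (Fintype.card H : ℂ) ≠ 0 := Nat.cast_ne_zero.mpr Fintype.card_ne_zero
  have hz : (fun h : H =>
        (Nat.card H : ℂ)⁻¹ *
          ∑ χ ∈ X, ((χ (h : G))⁻¹ : ℂˣ) *
            groupDet (G ⧸ H) (fun C : G ⧸ H =>
              ∑ g ∈ Finset.univ.filter (fun g : G => (QuotientGroup.mk g : G ⧸ H) = C),
                (χ g : ℂ) * x g))
      = fun h : H => (Fintype.card H : ℂ)⁻¹ * ∑ χ ∈ X, ((χ (h : G) : ℂ))⁻¹ * P χ := by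
    funext h
    rw [Nat.card_eq_fintype_card]
    congr 1
    refine Finset.sum_congr rfl fun χ _ => ?_
    rw [hQ χ, Units.val_inv_eq_inv_val]
  rw [hz]
  conv_rhs => rw [GD.groupDet_eq_prod]
  -- inner sums
  have hinner : ∀ φ : H →* ℂˣ,
      (∑ h : H, (φ h : ℂ) * ((Fintype.card H : ℂ)⁻¹ * ∑ χ ∈ X, ((χ (h : G) : ℂ))⁻¹ * P χ))
        = P (σ φ) := by
    intro φ
    calc ∑ h : H, (φ h : ℂ) * ((Fintype.card H : ℂ)⁻¹ * ∑ χ ∈ X, ((χ (h : G) : ℂ))⁻¹ * P χ)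
        = (Fintype.card H : ℂ)⁻¹ *
            ∑ χ ∈ X, (∑ h : H, (φ h : ℂ) * ((χ (h : G) : ℂ))⁻¹) * P χ := by
          have e1 : ∀ h : H, (φ h : ℂ) * ((Fintype.card H : ℂ)⁻¹ * ∑ χ ∈ X, ((χ (h : G) : ℂ))⁻¹ * P χ)
              = ∑ χ ∈ X, (Fintype.card H : ℂ)⁻¹ * ((φ h : ℂ) * ((χ (h : G) : ℂ))⁻¹ * P χ) := by
            intro h
            rw [Finset.mul_sum, Finset.mul_sum]
            exact Finset.sum_congr rfl fun χ _ => by ring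
          rw [Finset.sum_congr rfl fun h _ => e1 h, Finset.sum_comm, Finset.mul_sum]
          refine Finset.sum_congr rfl fun χ _ => ?_
          rw [Finset.sum_mul, Finset.mul_sum]
      _ = (Fintype.card H : ℂ)⁻¹ *
            ∑ χ ∈ X, (if χ.domRestrict H = φ then (Fintype.card H : ℂ) else 0) * P χ := by
          refine congrArg _ (Finset.sum_congr rfl fun χ _ => ?_)
          congr 1
          have e2 : ∀ h : H, (φ h : ℂ) * ((χ (h : G) : ℂ))⁻¹ = ((φ * (χ.domRestrict H)⁻¹) h : ℂ) := by
            intro h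
            simp only [MonoidHom.mul_apply, MonoidHom.inv_apply, MonoidHom.restrict_apply,
              Units.val_mul, Units.val_inv_eq_inv_val]
          rw [Finset.sum_congr rfl fun h _ => e2 h, GD.sum_char_eq]
          have hiff : (φ * (χ.domRestrict H)⁻¹ = 1) ↔ (χ.domRestrict H = φ) :=
            ⟨fun hh => (mul_inv_eq_one.mp hh).symm, fun hh => mul_inv_eq_one.mpr hh.symm⟩
          exact if_congr hiff rfl rfl
      _ = (Fintype.card H : ℂ)⁻¹ * ((Fintype.card H : ℂ) * P (σ φ)) := by
          congr 1
          rw [Finset.sum_eq_single (σ φ)]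
          · rw [if_pos (hσres φ)]
          · intro χ hχ hne
            rw [if_neg, zero_mul]
            intro hEq
            exact hne (resinj χ hχ (σ φ) (hσX φ) (hEq.trans (hσres φ).symm))
          · intro habs; exact absurd (hσX φ) habs
      _ = P (σ φ) := by
          rw [← mul_assoc, inv_mul_cancel₀ hHcard, one_mul]
  calc groupDet G x = ∏ χ : G →* ℂˣ, S χ := GD.groupDet_eq_prod G x
    _ = ∏ χ ∈ X, P χ := (hbij S).symm
    _ = ∏ φ : H →* ℂˣ, P (σ φ) := by
        refine (Finset.prod_bij (fun φ _ => σ φ) (fun φ _ => hσX φ) ?_ ?_ (fun φ _ => rfl)).symm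
        · intro φ₁ _ φ₂ _ hEq
          have := congrArg (fun χ : G →* ℂˣ => χ.domRestrict H) hEq
          simpa only [hσres] using this
        · intro χ hχ
          refine ⟨χ.domRestrict H, Finset.mem_univ _, ?_⟩
          exact resinj _ (hσX _) _ hχ (hσres _)
    _ = ∏ φ : H →* ℂˣ, ∑ h : H, (φ h : ℂ) *
          ((Fintype.card H : ℂ)⁻¹ * ∑ χ ∈ X, ((χ (h : G) : ℂ))⁻¹ * P χ) := by
        exact Finset.prod_congr rfl fun φ _ => (hinner φ).symm
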